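/- Every principal ideal semidomain is a unique factorization semidomain: every irreducible element is prime, and every nonzero nonunit element is a product of irreducible elements. -/
import Mathlib


/-- Every principal ideal semidomain is a unique factorization semidomain. -/
theorem PISD_is_UFSD {S : Type*} [CommSemiring S] [Nontrivial S] [IsCancelMulZero S]
    (hpis : ∀ I : Ideal S, ∃ a : S, I = Ideal.span {a}) :
    (∀ s : S, Irreducible s → Prime s) ∧
    (∀ s : S, s ≠ 0 → ¬IsUnit s →
      ∃ l : Multiset S, (∀ x ∈ l, Irreducible x) ∧ l.prod = s) := by
  haveI : IsDomain S := {}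
  -- Noetherian: every ideal is principal, hence finitely generated
  haveI : IsNoetherianRing S := isNoetherianRing_iff.mpr <| isNoetherian_def.mpr fun I => by
    obtain ⟨a, rfl⟩ := hpis I
    exact ⟨{a}, by simp⟩
  haveI : WfDvdMonoid S := ⟨by
    have hwf : WellFounded ((· > ·) : Ideal S → Ideal S → Prop) :=
      (isNoetherian_iff'.mp inferInstance).wf
    refine Subrelation.wf (r := InvImage (· > ·) (fun b : S => Ideal.span {b})) ?_
      (InvImage.wf _ hwf)
    rintro a b ⟨ha, x, hx, rfl⟩
    exact Ideal.factors_decreasing a x ha hx⟩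
  constructor
  · -- irreducible → prime
    intro p hp
    refine ⟨hp.ne_zero, hp.not_isUnit, fun a b hab => ?_⟩
    obtain ⟨d, hd⟩ := hpis (Ideal.span {p, a})
    have hpd : d ∣ p := Ideal.mem_span_singleton.mp <| hd ▸ Ideal.subset_span (by simp)
    have had : d ∣ a := Ideal.mem_span_singleton.mp <| hd ▸ Ideal.subset_span (by simp)
    obtain ⟨c, hc⟩ := hpd
    rcases hp.isUnit_or_isUnit hc with hu | hu
    · -- d is unit, so span {p, a} = ⊤, so 1 = x*p + y*a
      have htop : Ideal.span ({p, a} : Set S) = ⊤ := by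
        rw [hd]; exact Ideal.span_singleton_eq_top.mpr hu
      have h1 : (1 : S) ∈ Ideal.span ({p, a} : Set S) := htop ▸ Submodule.mem_top
      obtain ⟨x, y, hxy⟩ := Ideal.mem_span_pair.mp h1
      right
      have : b = x * p * b + y * (a * b) := by
        calc b = (x * p + y * a) * b := by rw [hxy, one_mul]
        _ = x * p * b + y * (a * b) := by ring
      rw [this]
      exact dvd_add (by rw [mul_assoc]; exact Dvd.dvd.mul_left (dvd_mul_right p b) x) (hab.mul_left y)
    · -- c is unit, so p ∣ d ∣ a
      left
      have hassoc : Associated d p := ⟨hu.unit, by rw [IsUnit.unit_spec, hc.symm]⟩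
      exact dvd_trans hassoc.symm.dvd had
  · intro s hs0 hsu
    obtain ⟨f, hi, he, _⟩ := (WfDvdMonoid.not_unit_iff_exists_factors_eq s hs0).mp hsu
    exact ⟨f, hi, he⟩
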